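/- There exists a family (K_β)_{β ∈ ℤ^{⊕I}} of F-linear subspaces of K_t(A) such that K_t(A) is the internal direct sum of the K_β, 1 ∈ K_0, K_β · K_γ ⊆ K_{β+γ} for all β, γ, and y(i,m) ∈ K_{(−1)^m e_i} for all i ∈ I and m ∈ ℤ (where e_i denotes the i-th standard basis element of ℤ^{⊕I}). Moreover this grading is compatible with the braid group action via simple reflections: for every i ∈ I and β ∈ ℤ^{⊕I}, T_i(K_β) ⊆ K_{s_i(β)}, where s_i(β) := β − (Σ_{j∈I} a(i,j) β_j) e_i is the simple reflection on the root lattice. -/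

import Mathlib

noncomputable section

/-- The base field `F = ℂ(s)`, rational functions over `ℂ` in one variable `s`. -/
abbrev F : Type := RatFunc ℂ

/-- `t^{1/2} := s`. -/
def tHalf : F := RatFunc.X

/-- `t := s^2`. -/
def tq : F := RatFunc.X ^ 2

/-- `A = (a i j)` is the Cartan matrix of a finite-dimensional simply-laced simple Lie
algebra of type ADE: a symmetric positive-definite integer matrix with diagonal entries `2`
and off-diagonal entries in `{0, -1}`. -/
def IsCartanADE {I : Type} [Fintype I] (a : I → I → ℤ) : Prop :=
  (∀ i, a i i = 2) ∧ (∀ i j, a i j = a j i) ∧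
    (∀ i j, i ≠ j → a i j = 0 ∨ a i j = -1) ∧
    Matrix.PosDef (Matrix.of fun i j : I => (a i j : ℝ))

variable {I : Type} [Fintype I] [DecidableEq I]

/-- The generator `y(i,m)` of the free algebra. -/
def X (i : I) (m : ℤ) : FreeAlgebra F (I × ℤ) := FreeAlgebra.ι F (i, m)

/-- The defining relations (a), (b), (c) of the quantum Grothendieck ring `K_t(A)`:
(a) quantum Serre relations in each copy, (b) `t`-boson relations between adjacent
copies, (c) `t`-commutation relations between non-adjacent copies. -/
inductive KtRel (a : I → I → ℤ) :
    FreeAlgebra F (I × ℤ) → FreeAlgebra F (I × ℤ) → Prop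
  | comm0 {i j : I} {m : ℤ} (h : a i j = 0) :
      KtRel a (X i m * X j m) (X j m * X i m)
  | serre {i j : I} {m : ℤ} (h : a i j = -1) :
      KtRel a (X i m ^ 2 * X j m + X j m * X i m ^ 2)
        ((tq + tq⁻¹) • (X i m * X j m * X i m))
  | boson (i j : I) (m : ℤ) :
      KtRel a (X i m * X j (m + 1))
        ((tq ^ (a i j)) • (X j (m + 1) * X i m)
          + (if i = j then ((1 : F) - tq ^ 2) • (1 : FreeAlgebra F (I × ℤ)) else 0))
  | tcomm {i j : I} {m p : ℤ} (h : p > m + 1) :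
      KtRel a (X i m * X j p)
        ((tq ^ ((((-1 : ℤˣ) ^ (p - m + 1) : ℤˣ) : ℤ) * a i j)) • (X j p * X i m))

/-- The quantum Grothendieck ring `K_t(A)`. -/
abbrev Kt (a : I → I → ℤ) := RingQuot (KtRel a)

/-- The generators `y(i,m)` of `K_t(A)`. -/
def y (a : I → I → ℤ) (i : I) (m : ℤ) : Kt a :=
  RingQuot.mkAlgHom F (KtRel a) (X i m)

/-- `z(i; j, m) := (t^{1/2} y(j,m) y(i,m) − t^{−1/2} y(i,m) y(j,m)) / (t − t^{−1})`. -/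
def z (a : I → I → ℤ) (i j : I) (m : ℤ) : Kt a :=
  (tq - tq⁻¹)⁻¹ • (tHalf • (y a j m * y a i m) - tHalf⁻¹ • (y a i m * y a j m))

/-- `T` satisfies the defining formulas of the braid-group generator `T_i` on `K_t(A)`:
`T(y(j,m)) = y(j, m + δ_{ij})` if `a i j ≠ -1`, and
`T(y(j,m)) = (t^{1/2} y(j,m) y(i,m) − t^{−1/2} y(i,m) y(j,m)) / (t − t^{−1})`
if `a i j = -1`. -/
def TiFormula (a : I → I → ℤ) (i : I) (T : Kt a → Kt a) : Prop :=
  ∀ (j : I) (m : ℤ),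
    T (y a j m) =
      if a i j = -1 then z a i j m else y a j (m + if i = j then 1 else 0)

/-- `T` satisfies the defining formulas of the inverse braid-group generator `T_i'`:
`T(y(j,m)) = y(j, m − δ_{ij})` if `a i j ≠ -1`, and
`T(y(j,m)) = (t^{1/2} y(i,m) y(j,m) − t^{−1/2} y(j,m) y(i,m)) / (t − t^{−1})`
if `a i j = -1`. -/
def TiInvFormula (a : I → I → ℤ) (i : I) (T : Kt a → Kt a) : Prop :=
  ∀ (j : I) (m : ℤ),
    T (y a j m) =
      if a i j = -1 then
        (tq - tq⁻¹)⁻¹ • (tHalf • (y a i m * y a j m) - tHalf⁻¹ • (y a j m * y a i m))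
      else y a j (m - if i = j then 1 else 0)

set_option linter.unusedSectionVars false

namespace S8

open MonoidAlgebra

variable (a : I → I → ℤ)

/-- The grading group. -/
abbrev GI (I : Type) := Multiplicative (I → ℤ)

abbrev MA (a : I → I → ℤ) := MonoidAlgebra (Kt a) (GI I)

/-- Degree of the generator `y i m`. -/
def dg (i : I) (m : ℤ) : GI I :=
  Multiplicative.ofAdd (Pi.single i ((((-1 : ℤˣ) ^ m : ℤˣ) : ℤ)))

def fgen : I × ℤ → MA a := fun p => single (dg p.1 p.2) (y a p.1 p.2)

lemma liftX (i : I) (m : ℤ) :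
    FreeAlgebra.lift F (fgen a) (X i m) = single (dg i m) (y a i m) := by
  simp [X, fgen]

lemma dg_mul_dg_succ (i : I) (m : ℤ) : dg i m * dg i (m + 1) = 1 := by
  unfold dg
  rw [← ofAdd_add, ← Pi.single_add]
  have : ((((-1 : ℤˣ) ^ m : ℤˣ)) : ℤ) + ((((-1 : ℤˣ) ^ (m + 1) : ℤˣ)) : ℤ) = 0 := by
    rw [zpow_add_one]
    push_cast
    ring
  rw [this, Pi.single_zero, ofAdd_zero]

lemma hrel : ∀ ⦃u v⦄, KtRel a u v →
    FreeAlgebra.lift F (fgen a) u = FreeAlgebra.lift F (fgen a) v := by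
  intro u v r
  induction r with
  | @comm0 i j m h =>
    have hc : y a i m * y a j m = y a j m * y a i m := by
      simpa [y, map_mul] using RingQuot.mkAlgHom_rel F (KtRel.comm0 (a := a) (m := m) h)
    simp only [map_mul, liftX, single_mul_single]
    rw [hc, mul_comm (dg i m)]
  | @serre i j m h =>
    have hc : y a i m ^ 2 * y a j m + y a j m * y a i m ^ 2
        = (tq + tq⁻¹) • (y a i m * y a j m * y a i m) := by
      simpa [y, map_mul, map_add, map_pow] using
        RingQuot.mkAlgHom_rel F (KtRel.serre (a := a) (m := m) h)
    simp only [map_smul, map_add, map_mul, map_pow, liftX, single_pow, single_mul_single]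
    rw [MonoidAlgebra.smul_single,
      show dg i m ^ 2 * dg j m = dg i m * dg j m * dg i m by
        simp [pow_two, mul_comm, mul_assoc, mul_left_comm],
      show dg j m * dg i m ^ 2 = dg i m * dg j m * dg i m by
        simp [pow_two, mul_comm, mul_assoc, mul_left_comm],
      ← MonoidAlgebra.single_add, hc]
  | boson i j m =>
    have hc : y a i m * y a j (m + 1)
        = (tq ^ (a i j)) • (y a j (m + 1) * y a i m)
          + (if i = j then ((1 : F) - tq ^ 2) • (1 : Kt a) else 0) := by
      simpa [y, map_mul, map_add, map_smul, apply_ite (RingQuot.mkAlgHom F (KtRel a))] using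
        RingQuot.mkAlgHom_rel F (KtRel.boson (a := a) i j m)
    by_cases hij : i = j
    · subst hij
      rw [if_pos rfl] at hc ⊢
      simp only [map_mul, map_add, map_smul, map_one, liftX, single_mul_single]
      rw [dg_mul_dg_succ, mul_comm (dg i (m + 1)) (dg i m), dg_mul_dg_succ, one_def,
        MonoidAlgebra.smul_single, MonoidAlgebra.smul_single, ← MonoidAlgebra.single_add, hc]
    · rw [if_neg hij] at hc ⊢
      rw [add_zero] at hc
      simp only [map_mul, map_add, map_smul, map_zero, add_zero, liftX, single_mul_single]
      rw [MonoidAlgebra.smul_single, mul_comm (dg j (m + 1)) (dg i m), hc]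
  | @tcomm i j m p h =>
    have hc : y a i m * y a j p
        = (tq ^ ((((-1 : ℤˣ) ^ (p - m + 1) : ℤˣ) : ℤ) * a i j)) • (y a j p * y a i m) := by
      simpa [y, map_mul, map_smul] using
        RingQuot.mkAlgHom_rel F (KtRel.tcomm (a := a) (i := i) (j := j) h)
    rw [map_mul, liftX, liftX, single_mul_single, map_smul, map_mul, liftX, liftX,
      single_mul_single, MonoidAlgebra.smul_single, mul_comm (dg j p) (dg i m), hc]

/-- The grading coaction. -/
def Δ : Kt a →ₐ[F] MA a :=
  RingQuot.liftAlgHom F ⟨FreeAlgebra.lift F (fgen a), hrel a⟩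

lemma Δ_y (i : I) (m : ℤ) : Δ a (y a i m) = single (dg i m) (y a i m) := by
  rw [y, Δ, RingQuot.liftAlgHom_mkAlgHom_apply, liftX, y]

/-- The grading component. -/
def Kc (β : I → ℤ) : Submodule F (Kt a) where
  carrier := {x | Δ a x = single (Multiplicative.ofAdd β) x}
  add_mem' := by
    intro u v hu hv
    simp only [Set.mem_setOf_eq] at *
    rw [map_add, hu, hv, ← MonoidAlgebra.single_add]
  zero_mem' := by simp
  smul_mem' := by
    intro c u hu
    simp only [Set.mem_setOf_eq] at *
    rw [map_smul, hu, MonoidAlgebra.smul_single]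

lemma one_mem_Kc : (1 : Kt a) ∈ Kc a 0 := by
  show Δ a 1 = _
  rw [map_one, one_def, ofAdd_zero]

lemma mul_mem_Kc {β γ : I → ℤ} {u v : Kt a} (hu : u ∈ Kc a β) (hv : v ∈ Kc a γ) :
    u * v ∈ Kc a (β + γ) := by
  show Δ a (u * v) = _
  rw [map_mul, hu, hv, single_mul_single, ← ofAdd_add]

lemma y_mem_Kc (i : I) (m : ℤ) :
    y a i m ∈ Kc a (Pi.single i ((((-1 : ℤˣ) ^ m : ℤˣ) : ℤ))) := Δ_y a i m


/-- Coefficient-extraction "kernel" submodule used for independence. -/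
def kerc (β : I → ℤ) : Submodule F (Kt a) where
  carrier := {x | (Δ a x).coeff (Multiplicative.ofAdd β) = 0}
  add_mem' := by
    intro u v hu hv
    simp only [Set.mem_setOf_eq] at *
    rw [map_add, MonoidAlgebra.coeff_add, Finsupp.add_apply, hu, hv, add_zero]
  zero_mem' := by simp
  smul_mem' := by
    intro c u hu
    simp only [Set.mem_setOf_eq] at *
    rw [map_smul, MonoidAlgebra.coeff_smul, Finsupp.smul_apply, hu, smul_zero]

lemma indep : iSupIndep (Kc a) := by
  intro β
  rw [Submodule.disjoint_def]
  intro x hxβ hxrest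
  have hker : (⨆ (γ) (_ : γ ≠ β), Kc a γ) ≤ kerc a β := by
    refine iSup_le fun γ => iSup_le fun hγ => ?_
    intro u hu
    have : Δ a u = single (Multiplicative.ofAdd γ) u := hu
    show (Δ a u).coeff (Multiplicative.ofAdd β) = 0
    rw [this]
    exact Finsupp.single_eq_of_ne' (by simpa using hγ)
  have h1 : (Δ a x).coeff (Multiplicative.ofAdd β) = x := by
    have : Δ a x = single (Multiplicative.ofAdd β) x := hxβ
    rw [this, MonoidAlgebra.coeff_single, Finsupp.single_eq_same]
  have h2 : (Δ a x).coeff (Multiplicative.ofAdd β) = 0 := hker hxrest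
  rw [h2] at h1
  exact h1.symm

lemma mem_sup_mul {x u : Kt a} (hx : x ∈ ⨆ β, Kc a β) (hu : u ∈ ⨆ β, Kc a β) :
    x * u ∈ ⨆ β, Kc a β := by
  induction hx using Submodule.iSup_induction' with
  | mem β x hx =>
    induction hu using Submodule.iSup_induction' with
    | mem γ u hu => exact Submodule.mem_iSup_of_mem (β + γ) (mul_mem_Kc a hx hu)
    | zero => rw [mul_zero]; exact zero_mem _
    | add u v _ _ hu hv => rw [mul_add]; exact add_mem hu hv
  | zero => rw [zero_mul]; exact zero_mem _
  | add x w _ _ hx hw => rw [add_mul]; exact add_mem hx hw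

lemma sup_eq_top : (⨆ β, Kc a β) = ⊤ := by
  rw [eq_top_iff]
  intro x _
  obtain ⟨w, rfl⟩ := RingQuot.mkAlgHom_surjective F (KtRel a) x
  induction w using FreeAlgebra.induction with
  | grade0 c =>
    rw [AlgHom.commutes]
    have : (algebraMap F (Kt a)) c = c • 1 := Algebra.algebraMap_eq_smul_one c
    rw [this]
    exact Submodule.mem_iSup_of_mem 0 (Submodule.smul_mem _ c (one_mem_Kc a))
  | grade1 p =>
    exact Submodule.mem_iSup_of_mem _ (y_mem_Kc a p.1 p.2)
  | mul u v hu hv => rw [map_mul]; exact mem_sup_mul a (hu Submodule.mem_top) (hv Submodule.mem_top)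
  | add u v hu hv => rw [map_add]; exact add_mem (hu Submodule.mem_top) (hv Submodule.mem_top)

lemma isInternal : DirectSum.IsInternal (Kc a) :=
  DirectSum.isInternal_submodule_of_iSupIndep_of_iSup_eq_top (indep a) (sup_eq_top a)

/-- The simple reflection on the root lattice, as an additive map. -/
def sRef (i : I) : (I → ℤ) →+ (I → ℤ) where
  toFun := fun β => β - Pi.single i (∑ j, a i j * β j)
  map_zero' := by simp
  map_add' := by
    intro β γ
    funext x
    simp only [Pi.add_apply, Pi.sub_apply, Pi.single_apply, Pi.add_apply]
    rw [show (∑ j, a i j * (β j + γ j)) = (∑ j, a i j * β j) + ∑ j, a i j * γ j by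
      rw [← Finset.sum_add_distrib]; congr 1; funext j; ring]
    split_ifs <;> ring

def σr (i : I) : GI I →* GI I := AddMonoidHom.toMultiplicative (sRef a i)

lemma σr_ofAdd (i : I) (β : I → ℤ) :
    σr a i (Multiplicative.ofAdd β) =
      Multiplicative.ofAdd (β - Pi.single i (∑ j, a i j * β j)) := rfl

lemma sum_single (i j : I) (c : ℤ) : (∑ j', a i j' * (Pi.single j c : I → ℤ) j') = a i j * c := by
  rw [Finset.sum_eq_single j]
  · rw [Pi.single_eq_same]
  · intro b _ hb
    rw [Pi.single_eq_of_ne hb, mul_zero]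
  · intro h
    exact absurd (Finset.mem_univ j) h

/-- The twisted map on the monoid algebra. -/
def Ψ (i : I) (T : Kt a →ₐ[F] Kt a) : MA a →ₐ[F] MA a :=
  MonoidAlgebra.liftNCAlgHom
    ((singleOneAlgHom : Kt a →ₐ[F] MA a).comp T)
    ((MonoidAlgebra.of (Kt a) (GI I)).comp (σr a i))
    (by
      intro u g
      show Commute (single 1 (T u)) (single (σr a i g) 1)
      unfold Commute SemiconjBy
      rw [single_mul_single, single_mul_single, one_mul, mul_one, one_mul, mul_one])

lemma Ψ_single (i : I) (T : Kt a →ₐ[F] Kt a) (g : GI I) (x : Kt a) :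
    Ψ a i T (single g x) = single (σr a i g) (T x) := by
  show MonoidAlgebra.liftNC _ _ _ = _
  rw [MonoidAlgebra.liftNC_single]
  show single 1 (T x) * single (σr a i g) 1 = _
  rw [single_mul_single, one_mul, mul_one]


lemma σr_dg (i j : I) (m : ℤ) :
    σr a i (dg j m) = Multiplicative.ofAdd
      ((Pi.single j ((((-1 : ℤˣ) ^ m : ℤˣ)) : ℤ) : I → ℤ)
        - Pi.single i (a i j * ((((-1 : ℤˣ) ^ m : ℤˣ)) : ℤ))) := by
  unfold dg
  rw [σr_ofAdd, sum_single]

lemma neg_one_zpow_succ (m : ℤ) :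
    ((((-1 : ℤˣ) ^ (m + 1) : ℤˣ)) : ℤ) = -((((-1 : ℤˣ) ^ m : ℤˣ)) : ℤ) := by
  rw [zpow_add_one]
  push_cast
  ring

lemma key (hA : IsCartanADE a) (i : I) (T : Kt a →ₐ[F] Kt a) (hT : TiFormula a i ⇑T) :
    (Δ a).comp T = (Ψ a i T).comp (Δ a) := by
  apply RingQuot.ringQuot_ext'
  apply FreeAlgebra.hom_ext
  funext p
  obtain ⟨j, m⟩ := p
  show Δ a (T (y a j m)) = Ψ a i T (Δ a (y a j m))
  rw [Δ_y, Ψ_single, hT j m]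
  by_cases hij : a i j = -1
  · rw [if_pos hij]
    have hσ : σr a i (dg j m) = dg i m * dg j m := by
      rw [σr_dg, hij]
      unfold dg
      rw [← ofAdd_add]
      apply congrArg
      funext x
      simp only [Pi.sub_apply, Pi.add_apply, Pi.single_apply]
      split_ifs <;> ring
    rw [hσ]
    unfold z
    rw [map_smul, map_sub, map_smul, map_smul, map_mul, map_mul, Δ_y, Δ_y,
      single_mul_single, single_mul_single, mul_comm (dg j m) (dg i m),
      MonoidAlgebra.smul_single, MonoidAlgebra.smul_single, ← MonoidAlgebra.single_sub, MonoidAlgebra.smul_single]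
  · rw [if_neg hij]
    by_cases hij2 : i = j
    · subst hij2
      rw [if_pos rfl, Δ_y]
      have hσ : σr a i (dg i m) = dg i (m + 1) := by
        rw [σr_dg, hA.1 i]
        unfold dg
        apply congrArg
        funext x
        simp only [Pi.sub_apply, Pi.single_apply, neg_one_zpow_succ]
        split_ifs <;> ring
      rw [hσ]
    · rw [if_neg hij2, add_zero, Δ_y]
      have h0 : a i j = 0 := (hA.2.2.1 i j hij2).resolve_right hij
      have hσ : σr a i (dg j m) = dg j m := by
        rw [σr_dg, h0, zero_mul, Pi.single_zero, sub_zero]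
        rfl
      rw [hσ]

end S8

/-- `K_t(A)` is graded by the root lattice `ℤ^{⊕I}`, with `1` in degree `0`,
multiplication adding degrees, `y(i,m)` of degree `(−1)^m e_i`, and the grading is
compatible with the braid group action: `T_i(K_β) ⊆ K_{s_i(β)}` where
`s_i(β) = β − (Σ_j a i j β_j) e_i`. -/
theorem statement8 {I : Type} [Fintype I] [DecidableEq I] (a : I → I → ℤ)
    (hA : IsCartanADE a) (T : I → (Kt a →ₐ[F] Kt a))
    (hT : ∀ i, TiFormula a i ⇑(T i)) :
    ∃ K : (I → ℤ) → Submodule F (Kt a),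
      DirectSum.IsInternal K ∧
      (1 : Kt a) ∈ K 0 ∧
      (∀ β γ : I → ℤ, ∀ u ∈ K β, ∀ v ∈ K γ, u * v ∈ K (β + γ)) ∧
      (∀ (i : I) (m : ℤ),
        y a i m ∈ K (Pi.single i ((((-1 : ℤˣ) ^ m : ℤˣ) : ℤ)))) ∧
      (∀ (i : I) (β : I → ℤ), ∀ u ∈ K β,
        T i u ∈ K (β - Pi.single i (∑ j : I, a i j * β j))) := by
  refine ⟨S8.Kc a, S8.isInternal a, S8.one_mem_Kc a, ?_, S8.y_mem_Kc a, ?_⟩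
  · intro β γ u hu v hv
    exact S8.mul_mem_Kc a hu hv
  · intro i β u hu
    have hk := DFunLike.congr_fun (S8.key a hA i (T i) (hT i)) u
    simp only [AlgHom.comp_apply] at hk
    show S8.Δ a (T i u) = _
    rw [hk, show S8.Δ a u = MonoidAlgebra.single (Multiplicative.ofAdd β) u from hu,
      S8.Ψ_single, S8.σr_ofAdd]
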